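/- arXiv:2404.07373 — 7 statements merged into one kernel-verified Lean document; each statement's English description precedes it below -/
import Mathlib

section
/- Suppose the matrices A ∈ ℝ^{n×n}, B_w ∈ ℝ^{n×n_w}, B_d ∈ ℝ^{n×n_d}, C_v ∈ ℝ^{n_v×n}, D_vw ∈ ℝ^{n_v×n_w}, D_vd ∈ ℝ^{n_v×n_d}, C_e ∈ ℝ^{n_e×n}, D_ew ∈ ℝ^{n_e×n_w}, D_ed ∈ ℝ^{n_e×n_d}, a symmetric positive semidefinite P ∈ ℝ^{n×n}, a scalar λ ≥ 0, a symmetric M, and a symmetric X satisfy the dissipativity LMI condition. Then for every admissible trajectory (x, w, d, v, e) of the linear system whose uncertainty signals satisfy the static integral quadratic constraint defined by M, and for every T ≥ 0, one has x(T)ᵀ P x(T) − x(0)ᵀ P x(0) ≤ ∫₀ᵀ [d(t); e(t)]ᵀ X [d(t); e(t)] dt. In other words, the system is dissipative with respect to the quadratic supply rate s(d, e) = [d; e]ᵀ X [d; e] with quadratic storage function S(x) = xᵀ P x. -/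
open Matrix

/-- Negative semidefiniteness of a real matrix: `zᵀ N z ≤ 0` for all `z`. -/
def IsNegSemidef {m : Type*} [Fintype m] (N : Matrix m m ℝ) : Prop :=
  ∀ z : m → ℝ, z ⬝ᵥ N *ᵥ z ≤ 0

/-- The dissipativity LMI condition
`[[AᵀP + PA, P Bw, P Bd], [Bwᵀ P, 0, 0], [Bdᵀ P, 0, 0]] + λ Hᵀ M H − Gᵀ X G ⪯ 0` with
`H = [[Cv, Dvw, Dvd], [0, I, 0]]` and `G = [[0, 0, I], [Ce, Dew, Ded]]`. -/
def DissLMI {ιn ιw ιd ιv ιe : Type*} [Fintype ιn] [Fintype ιw] [Fintype ιd]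
    [Fintype ιv] [Fintype ιe] [DecidableEq ιw] [DecidableEq ιd]
    (A : Matrix ιn ιn ℝ) (Bw : Matrix ιn ιw ℝ) (Bd : Matrix ιn ιd ℝ)
    (Cv : Matrix ιv ιn ℝ) (Dvw : Matrix ιv ιw ℝ) (Dvd : Matrix ιv ιd ℝ)
    (Ce : Matrix ιe ιn ℝ) (Dew : Matrix ιe ιw ℝ) (Ded : Matrix ιe ιd ℝ)
    (P : Matrix ιn ιn ℝ) (lam : ℝ)
    (M : Matrix (ιv ⊕ ιw) (ιv ⊕ ιw) ℝ)
    (X : Matrix (ιd ⊕ ιe) (ιd ⊕ ιe) ℝ) : Prop :=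
  let H : Matrix (ιv ⊕ ιw) (ιn ⊕ (ιw ⊕ ιd)) ℝ :=
    fromBlocks Cv (fromCols Dvw Dvd) 0 (fromCols 1 0)
  let G : Matrix (ιd ⊕ ιe) (ιn ⊕ (ιw ⊕ ιd)) ℝ :=
    fromBlocks 0 (fromCols 0 1) Ce (fromCols Dew Ded)
  let F0 : Matrix (ιn ⊕ (ιw ⊕ ιd)) (ιn ⊕ (ιw ⊕ ιd)) ℝ :=
    fromBlocks (Aᵀ * P + P * A) (fromCols (P * Bw) (P * Bd))
      (fromRows (Bwᵀ * P) (Bdᵀ * P)) 0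
  IsNegSemidef (F0 + lam • (Hᵀ * M * H) - Gᵀ * X * G)

/-- `(N a) ⬝ b = a ⬝ (Nᵀ b)`. -/
lemma mulVec_dotProduct_eq {m p : Type*} [Fintype m] [Fintype p]
    (N : Matrix m p ℝ) (a : p → ℝ) (b : m → ℝ) :
    (N *ᵥ a) ⬝ᵥ b = a ⬝ᵥ (Nᵀ *ᵥ b) := by
  rw [dotProduct_mulVec, vecMul_transpose]

lemma contOn_mulVec {k l : Type*} [Fintype k] [Fintype l] (N : Matrix k l ℝ)
    {f : ℝ → l → ℝ} {s : Set ℝ} (hf : ContinuousOn f s) :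
    ContinuousOn (fun t => N *ᵥ f t) s := by
  apply continuousOn_pi.mpr
  intro i
  simp only [mulVec, dotProduct]
  exact continuousOn_finset_sum _ fun j _ =>
    (continuousOn_const.mul ((continuous_apply j).comp_continuousOn hf))

lemma contOn_dot {k : Type*} [Fintype k] {f g : ℝ → k → ℝ} {s : Set ℝ}
    (hf : ContinuousOn f s) (hg : ContinuousOn g s) :
    ContinuousOn (fun t => f t ⬝ᵥ g t) s := by
  simp only [dotProduct]
  exact continuousOn_finset_sum _ fun j _ =>
    ((continuous_apply j).comp_continuousOn hf).mul
      ((continuous_apply j).comp_continuousOn hg)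

lemma contOn_elim {k l : Type*} {f : ℝ → k → ℝ} {g : ℝ → l → ℝ} {s : Set ℝ}
    (hf : ContinuousOn f s) (hg : ContinuousOn g s) :
    ContinuousOn (fun t => Sum.elim (f t) (g t)) s := by
  apply continuousOn_pi.mpr
  rintro (i | i)
  · exact (continuous_apply i).comp_continuousOn hf
  · exact (continuous_apply i).comp_continuousOn hg

/-- the dissipativity LMI implies dissipativity of the uncertain LTI
system with respect to the quadratic supply rate `[d;e]ᵀ X [d;e]` with storage
function `xᵀ P x`, for every admissible trajectory satisfying the static IQC. -/
theorem statement1 {n nw nd nv ne : ℕ}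
    (A : Matrix (Fin n) (Fin n) ℝ) (Bw : Matrix (Fin n) (Fin nw) ℝ)
    (Bd : Matrix (Fin n) (Fin nd) ℝ)
    (Cv : Matrix (Fin nv) (Fin n) ℝ) (Dvw : Matrix (Fin nv) (Fin nw) ℝ)
    (Dvd : Matrix (Fin nv) (Fin nd) ℝ)
    (Ce : Matrix (Fin ne) (Fin n) ℝ) (Dew : Matrix (Fin ne) (Fin nw) ℝ)
    (Ded : Matrix (Fin ne) (Fin nd) ℝ)
    (P : Matrix (Fin n) (Fin n) ℝ) (lam : ℝ)
    (M : Matrix (Fin nv ⊕ Fin nw) (Fin nv ⊕ Fin nw) ℝ)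
    (X : Matrix (Fin nd ⊕ Fin ne) (Fin nd ⊕ Fin ne) ℝ)
    (hP : P.PosSemidef) (hlam : 0 ≤ lam) (hM : M.IsSymm) (hX : X.IsSymm)
    (hLMI : DissLMI A Bw Bd Cv Dvw Dvd Ce Dew Ded P lam M X)
    (x : ℝ → Fin n → ℝ) (w : ℝ → Fin nw → ℝ) (d : ℝ → Fin nd → ℝ)
    (v : ℝ → Fin nv → ℝ) (e : ℝ → Fin ne → ℝ)
    (hw : ContinuousOn w (Set.Ici 0)) (hd : ContinuousOn d (Set.Ici 0))
    (hx : ∀ t ∈ Set.Ici (0:ℝ),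
      HasDerivWithinAt x (A *ᵥ x t + Bw *ᵥ w t + Bd *ᵥ d t) (Set.Ici 0) t)
    (hv : ∀ t, v t = Cv *ᵥ x t + Dvw *ᵥ w t + Dvd *ᵥ d t)
    (he : ∀ t, e t = Ce *ᵥ x t + Dew *ᵥ w t + Ded *ᵥ d t)
    (hIQC : ∀ T, 0 ≤ T → 0 ≤ ∫ t in (0:ℝ)..T,
      Sum.elim (v t) (w t) ⬝ᵥ M *ᵥ Sum.elim (v t) (w t)) :
    ∀ T, 0 ≤ T →
      x T ⬝ᵥ P *ᵥ x T - x 0 ⬝ᵥ P *ᵥ x 0 ≤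
        ∫ t in (0:ℝ)..T, Sum.elim (d t) (e t) ⬝ᵥ X *ᵥ Sum.elim (d t) (e t) := by
  intro T hT
  classical
  simp only [DissLMI, IsNegSemidef] at hLMI
  set xd : ℝ → Fin n → ℝ := fun t => A *ᵥ x t + Bw *ᵥ w t + Bd *ᵥ d t with hxd
  set φ : ℝ → ℝ := fun t => x t ⬝ᵥ P *ᵥ x t with hφdef
  set φ' : ℝ → ℝ := fun t => xd t ⬝ᵥ P *ᵥ x t + x t ⬝ᵥ P *ᵥ xd t with hφ'def
  set q : ℝ → ℝ := fun t => Sum.elim (v t) (w t) ⬝ᵥ M *ᵥ Sum.elim (v t) (w t) with hqdef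
  set s : ℝ → ℝ := fun t => Sum.elim (d t) (e t) ⬝ᵥ X *ᵥ Sum.elim (d t) (e t) with hsdef
  -- pointwise inequality from the LMI
  have key : ∀ t : ℝ, φ' t ≤ s t - lam * q t := by
    intro t
    set z : Fin n ⊕ (Fin nw ⊕ Fin nd) → ℝ := Sum.elim (x t) (Sum.elim (w t) (d t)) with hz
    have h0 := hLMI z
    rw [sub_mulVec, add_mulVec, smul_mulVec, dotProduct_sub, dotProduct_add,
      dotProduct_smul] at h0
    have hHz : (fromBlocks Cv (fromCols Dvw Dvd) 0 (fromCols 1 0)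
        : Matrix (Fin nv ⊕ Fin nw) (Fin n ⊕ (Fin nw ⊕ Fin nd)) ℝ) *ᵥ z
        = Sum.elim (v t) (w t) := by
      simp [hz, fromBlocks_mulVec, hv t, add_assoc]
    have hGz : (fromBlocks 0 (fromCols 0 1) Ce (fromCols Dew Ded)
        : Matrix (Fin nd ⊕ Fin ne) (Fin n ⊕ (Fin nw ⊕ Fin nd)) ℝ) *ᵥ z
        = Sum.elim (d t) (e t) := by
      simp [hz, fromBlocks_mulVec, he t, add_assoc]
    have hH : z ⬝ᵥ (((fromBlocks Cv (fromCols Dvw Dvd) 0 (fromCols 1 0)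
        : Matrix (Fin nv ⊕ Fin nw) (Fin n ⊕ (Fin nw ⊕ Fin nd)) ℝ)ᵀ * M *
        (fromBlocks Cv (fromCols Dvw Dvd) 0 (fromCols 1 0)
        : Matrix (Fin nv ⊕ Fin nw) (Fin n ⊕ (Fin nw ⊕ Fin nd)) ℝ)) : Matrix (Fin n ⊕ (Fin nw ⊕ Fin nd)) (Fin n ⊕ (Fin nw ⊕ Fin nd)) ℝ) *ᵥ z = q t := by
      rw [← mulVec_mulVec, ← mulVec_mulVec, dotProduct_mulVec, vecMul_transpose, hHz, hqdef]
    have hG : z ⬝ᵥ (((fromBlocks 0 (fromCols 0 1) Ce (fromCols Dew Ded)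
        : Matrix (Fin nd ⊕ Fin ne) (Fin n ⊕ (Fin nw ⊕ Fin nd)) ℝ)ᵀ * X *
        (fromBlocks 0 (fromCols 0 1) Ce (fromCols Dew Ded)
        : Matrix (Fin nd ⊕ Fin ne) (Fin n ⊕ (Fin nw ⊕ Fin nd)) ℝ)) : Matrix (Fin n ⊕ (Fin nw ⊕ Fin nd)) (Fin n ⊕ (Fin nw ⊕ Fin nd)) ℝ) *ᵥ z = s t := by
      rw [← mulVec_mulVec, ← mulVec_mulVec, dotProduct_mulVec, vecMul_transpose, hGz, hsdef]
    have hF : z ⬝ᵥ (fromBlocks (Aᵀ * P + P * A) (fromCols (P * Bw) (P * Bd))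
        (fromRows (Bwᵀ * P) (Bdᵀ * P)) 0 : Matrix (Fin n ⊕ (Fin nw ⊕ Fin nd))
          (Fin n ⊕ (Fin nw ⊕ Fin nd)) ℝ) *ᵥ z = φ' t := by
      simp only [hz, hφ'def, hxd, fromBlocks_mulVec, fromCols_mulVec_sumElim,
        fromRows_mulVec, zero_mulVec, add_zero, sumElim_dotProduct_sumElim,
        add_mulVec, ← mulVec_mulVec, dotProduct_add, add_dotProduct, mulVec_add,
        mulVec_dotProduct_eq, Sum.elim_comp_inl, Sum.elim_comp_inr]
      ring
    rw [hH, hG, hF, smul_eq_mul] at h0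
    linarith
  -- continuity facts
  have hxc : ContinuousOn x (Set.Ici 0) := fun t ht => (hx t ht).continuousWithinAt
  have hxdc : ContinuousOn xd (Set.Ici 0) :=
    ((contOn_mulVec A hxc).add (contOn_mulVec Bw hw)).add (contOn_mulVec Bd hd)
  have hvc : ContinuousOn v (Set.Ici 0) := by
    have : ContinuousOn (fun t => Cv *ᵥ x t + Dvw *ᵥ w t + Dvd *ᵥ d t) (Set.Ici 0) :=
      ((contOn_mulVec Cv hxc).add (contOn_mulVec Dvw hw)).add (contOn_mulVec Dvd hd)
    exact this.congr fun t _ => hv t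
  have hec : ContinuousOn e (Set.Ici 0) := by
    have : ContinuousOn (fun t => Ce *ᵥ x t + Dew *ᵥ w t + Ded *ᵥ d t) (Set.Ici 0) :=
      ((contOn_mulVec Ce hxc).add (contOn_mulVec Dew hw)).add (contOn_mulVec Ded hd)
    exact this.congr fun t _ => he t
  have hφ'c : ContinuousOn φ' (Set.Ici 0) :=
    (contOn_dot hxdc (contOn_mulVec P hxc)).add (contOn_dot hxc (contOn_mulVec P hxdc))
  have hqc : ContinuousOn q (Set.Ici 0) :=
    contOn_dot (contOn_elim hvc hw) (contOn_mulVec M (contOn_elim hvc hw))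
  have hsc : ContinuousOn s (Set.Ici 0) :=
    contOn_dot (contOn_elim hd hec) (contOn_mulVec X (contOn_elim hd hec))
  have hIcc : Set.Icc (0:ℝ) T ⊆ Set.Ici 0 := Set.Icc_subset_Ici_self
  -- derivative of φ
  have hφ : ∀ t ∈ Set.Ici (0:ℝ), HasDerivWithinAt φ (φ' t) (Set.Ici 0) t := by
    intro t ht
    have hxi : ∀ i, HasDerivWithinAt (fun τ => x τ i) (xd t i) (Set.Ici 0) t :=
      fun i => hasDerivWithinAt_pi.mp (hx t ht) i
    have hsum : HasDerivWithinAt (fun τ => ∑ i, ∑ j, x τ i * (P i j * x τ j))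
        (∑ i, ∑ j, (xd t i * (P i j * x t j) + x t i * (P i j * xd t j)))
        (Set.Ici 0) t := by
      apply HasDerivWithinAt.fun_sum
      intro i _
      apply HasDerivWithinAt.fun_sum
      intro j _
      exact (hxi i).mul ((hxi j).const_mul (P i j))
    convert hsum using 1
    · funext τ
      simp [hφdef, dotProduct, mulVec, Finset.mul_sum]
    · simp [hφ'def, dotProduct, mulVec, Finset.mul_sum, Finset.sum_add_distrib]
  -- integrability
  have hintφ' : IntervalIntegrable φ' MeasureTheory.volume 0 T :=
    (hφ'c.mono hIcc).intervalIntegrable_of_Icc hT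
  have hintq : IntervalIntegrable q MeasureTheory.volume 0 T :=
    (hqc.mono hIcc).intervalIntegrable_of_Icc hT
  have hints : IntervalIntegrable s MeasureTheory.volume 0 T :=
    (hsc.mono hIcc).intervalIntegrable_of_Icc hT
  -- FTC
  have hFTC : ∫ t in (0:ℝ)..T, φ' t = φ T - φ 0 := by
    apply intervalIntegral.integral_eq_sub_of_hasDeriv_right_of_le hT
    · exact (contOn_dot hxc (contOn_mulVec P hxc)).mono hIcc
    · intro t ht
      exact (hφ t (le_of_lt ht.1)).mono fun y hy => le_of_lt (lt_trans ht.1 hy)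
    · exact hintφ'
  -- integral comparison
  have hmono : ∫ t in (0:ℝ)..T, φ' t ≤ ∫ t in (0:ℝ)..T, (s t - lam * q t) := by
    apply intervalIntegral.integral_mono_on hT hintφ' (hints.sub (hintq.const_mul lam))
    intro t _
    exact key t
  have hsplit : ∫ t in (0:ℝ)..T, (s t - lam * q t)
      = (∫ t in (0:ℝ)..T, s t) - lam * ∫ t in (0:ℝ)..T, q t := by
    rw [intervalIntegral.integral_sub hints (hintq.const_mul lam),
      intervalIntegral.integral_const_mul]
  have hq0 : 0 ≤ ∫ t in (0:ℝ)..T, q t := hIQC T hT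
  have := mul_nonneg hlam hq0
  have hfinal : φ T - φ 0 ≤ ∫ t in (0:ℝ)..T, s t := by
    rw [← hFTC]; rw [hsplit] at hmono; linarith
  simpa [hφdef, hsdef] using hfinal
end

section
/- Suppose the matrices A, B_w, B_d, C_v, D_vw, D_vd, C_e, D_ew, D_ed, a symmetric positive semidefinite P, a scalar λ ≥ 0, and a symmetric M satisfy the dissipativity LMI condition with X = 0 (the zero supply-rate matrix). Then for every admissible trajectory (x, w, d, v, e) of the linear system whose uncertainty signals satisfy the static integral quadratic constraint defined by M, the storage function is nonincreasing along the trajectory: x(T)ᵀ P x(T) ≤ x(0)ᵀ P x(0) for every T ≥ 0. -/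
set_option maxHeartbeats 1000000

open Matrix

lemma mulVec_dotProduct_eq_s3 {m n : Type*} [Fintype m] [Fintype n]
    (A : Matrix m n ℝ) (u : n → ℝ) (y : m → ℝ) :
    (A *ᵥ u) ⬝ᵥ y = u ⬝ᵥ (Aᵀ *ᵥ y) := by
  rw [dotProduct_mulVec, vecMul_transpose, dotProduct_comm]

lemma F0_quad {n nw nd : ℕ}
    (A : Matrix (Fin n) (Fin n) ℝ) (Bw : Matrix (Fin n) (Fin nw) ℝ)
    (Bd : Matrix (Fin n) (Fin nd) ℝ) (P : Matrix (Fin n) (Fin n) ℝ)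
    (a : Fin n → ℝ) (b : Fin nw → ℝ) (c : Fin nd → ℝ) :
    (Sum.elim a (Sum.elim b c)) ⬝ᵥ
      (fromBlocks (Aᵀ * P + P * A) (fromCols (P * Bw) (P * Bd))
        (fromRows (Bwᵀ * P) (Bdᵀ * P)) 0) *ᵥ (Sum.elim a (Sum.elim b c))
    = (A *ᵥ a + Bw *ᵥ b + Bd *ᵥ c) ⬝ᵥ P *ᵥ a + a ⬝ᵥ P *ᵥ (A *ᵥ a + Bw *ᵥ b + Bd *ᵥ c) := by
  simp only [fromBlocks_mulVec, fromCols_mulVec_sumElim, fromRows_mulVec,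
    sumElim_dotProduct_sumElim, add_mulVec, mulVec_add, dotProduct_add, add_dotProduct,
    ← mulVec_mulVec, mulVec_dotProduct_eq_s3, zero_mulVec, dotProduct_zero, add_zero,
    mulVec_zero, Sum.elim_comp_inl, Sum.elim_comp_inr]
  ring

lemma H_mulVec {n nw nd nv : ℕ}
    (Cv : Matrix (Fin nv) (Fin n) ℝ) (Dvw : Matrix (Fin nv) (Fin nw) ℝ)
    (Dvd : Matrix (Fin nv) (Fin nd) ℝ)
    (a : Fin n → ℝ) (b : Fin nw → ℝ) (c : Fin nd → ℝ) :
    (fromBlocks Cv (fromCols Dvw Dvd) 0 (fromCols 1 0) :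
        Matrix (Fin nv ⊕ Fin nw) (Fin n ⊕ (Fin nw ⊕ Fin nd)) ℝ)
      *ᵥ (Sum.elim a (Sum.elim b c))
    = Sum.elim (Cv *ᵥ a + (Dvw *ᵥ b + Dvd *ᵥ c)) b := by
  simp [fromBlocks_mulVec, fromCols_mulVec_sumElim, add_assoc]

/-- the dissipativity LMI with `X = 0` implies that the storage
function `xᵀ P x` is nonincreasing along every admissible trajectory whose
uncertainty signals satisfy the static IQC defined by `M`. -/
theorem statement3 {n nw nd nv ne : ℕ}
    (A : Matrix (Fin n) (Fin n) ℝ) (Bw : Matrix (Fin n) (Fin nw) ℝ)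
    (Bd : Matrix (Fin n) (Fin nd) ℝ)
    (Cv : Matrix (Fin nv) (Fin n) ℝ) (Dvw : Matrix (Fin nv) (Fin nw) ℝ)
    (Dvd : Matrix (Fin nv) (Fin nd) ℝ)
    (Ce : Matrix (Fin ne) (Fin n) ℝ) (Dew : Matrix (Fin ne) (Fin nw) ℝ)
    (Ded : Matrix (Fin ne) (Fin nd) ℝ)
    (P : Matrix (Fin n) (Fin n) ℝ) (lam : ℝ)
    (M : Matrix (Fin nv ⊕ Fin nw) (Fin nv ⊕ Fin nw) ℝ)
    (hP : P.PosSemidef) (hlam : 0 ≤ lam) (hM : M.IsSymm)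
    (hLMI : DissLMI A Bw Bd Cv Dvw Dvd Ce Dew Ded P lam M 0)
    (x : ℝ → Fin n → ℝ) (w : ℝ → Fin nw → ℝ) (d : ℝ → Fin nd → ℝ)
    (v : ℝ → Fin nv → ℝ) (e : ℝ → Fin ne → ℝ)
    (hw : ContinuousOn w (Set.Ici 0)) (hd : ContinuousOn d (Set.Ici 0))
    (hx : ∀ t ∈ Set.Ici (0:ℝ),
      HasDerivWithinAt x (A *ᵥ x t + Bw *ᵥ w t + Bd *ᵥ d t) (Set.Ici 0) t)
    (hv : ∀ t, v t = Cv *ᵥ x t + Dvw *ᵥ w t + Dvd *ᵥ d t)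
    (he : ∀ t, e t = Ce *ᵥ x t + Dew *ᵥ w t + Ded *ᵥ d t)
    (hIQC : ∀ T, 0 ≤ T → 0 ≤ ∫ t in (0:ℝ)..T,
      Sum.elim (v t) (w t) ⬝ᵥ M *ᵥ Sum.elim (v t) (w t)) :
    ∀ T, 0 ≤ T → x T ⬝ᵥ P *ᵥ x T ≤ x 0 ⬝ᵥ P *ᵥ x 0 := by
  intro T hT
  -- notation
  set x' : ℝ → Fin n → ℝ := fun t => A *ᵥ x t + Bw *ᵥ w t + Bd *ᵥ d t with hx'def
  set φ : ℝ → ℝ := fun t => x t ⬝ᵥ P *ᵥ x t with hφdef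
  set g : ℝ → ℝ := fun t => x' t ⬝ᵥ P *ᵥ x t + x t ⬝ᵥ P *ᵥ x' t with hgdef
  set ψ : ℝ → ℝ := fun t => Sum.elim (v t) (w t) ⬝ᵥ M *ᵥ Sum.elim (v t) (w t) with hψdef
  have hxc : ContinuousOn x (Set.Ici 0) := fun t ht => (hx t ht).continuousWithinAt
  -- continuity of x'
  have hmv : ∀ {k l : Type} [Fintype k] (Q : Matrix l k ℝ) (f : ℝ → k → ℝ),
      ContinuousOn f (Set.Ici 0) → ContinuousOn (fun t => Q *ᵥ f t) (Set.Ici (0:ℝ)) := by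
    intro k l _ Q f hf
    exact (continuous_const.matrix_mulVec continuous_id).comp_continuousOn hf
  have hx'c : ContinuousOn x' (Set.Ici 0) :=
    ((hmv A x hxc).add (hmv Bw w hw)).add (hmv Bd d hd)
  have hquadc : ∀ {k : Type} [Fintype k] (Q : Matrix k k ℝ),
      Continuous fun p : (k → ℝ) × (k → ℝ) => p.1 ⬝ᵥ Q *ᵥ p.2 := by
    intro k _ Q
    exact continuous_fst.dotProduct (continuous_const.matrix_mulVec continuous_snd)
  have hgc : ContinuousOn g (Set.Ici 0) := by
    apply ContinuousOn.add
    · exact (hquadc P).comp_continuousOn (hx'c.prodMk hxc)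
    · exact (hquadc P).comp_continuousOn (hxc.prodMk hx'c)
  -- continuity of ψ
  have hvc : ContinuousOn v (Set.Ici 0) := by
    have : v = fun t => Cv *ᵥ x t + Dvw *ᵥ w t + Dvd *ᵥ d t := funext hv
    rw [this]
    exact ((hmv Cv x hxc).add (hmv Dvw w hw)).add (hmv Dvd d hd)
  have hqc : ContinuousOn (fun t => Sum.elim (v t) (w t)) (Set.Ici (0:ℝ)) := by
    apply continuousOn_pi.mpr
    rintro (i | j)
    · exact (continuous_apply i).comp_continuousOn hvc
    · exact (continuous_apply j).comp_continuousOn hw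
  have hψc : ContinuousOn ψ (Set.Ici 0) :=
    (hquadc M).comp_continuousOn (hqc.prodMk hqc)
  -- derivative of φ
  have hφderiv : ∀ t ∈ Set.Ici (0:ℝ), HasDerivWithinAt φ (g t) (Set.Ici 0) t := by
    intro t ht
    have hxi : ∀ i, HasDerivWithinAt (fun s => x s i) (x' t i) (Set.Ici 0) t :=
      fun i => hasDerivWithinAt_pi.mp (hx t ht) i
    have hsum : HasDerivWithinAt (fun s => ∑ i, ∑ j, x s i * P i j * x s j)
        (∑ i, ∑ j, (x' t i * P i j * x t j + x t i * P i j * x' t j)) (Set.Ici 0) t := by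
      apply HasDerivWithinAt.fun_sum; intro i _
      apply HasDerivWithinAt.fun_sum; intro j _
      exact ((hxi i).mul_const (P i j)).mul (hxi j)
    have e1 : φ = fun s => ∑ i, ∑ j, x s i * P i j * x s j := by
      funext s
      simp [hφdef, dotProduct, mulVec, Finset.mul_sum, mul_assoc]
    have e2 : g t = ∑ i, ∑ j, (x' t i * P i j * x t j + x t i * P i j * x' t j) := by
      simp only [hgdef, dotProduct, mulVec, Finset.mul_sum, Finset.sum_add_distrib]
      congr 1 <;> · apply Finset.sum_congr rfl; intro i _
                    apply Finset.sum_congr rfl; intro j _; ring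
    rw [e1, e2]
    exact hsum
  -- pointwise bound from the LMI
  have key : ∀ t, g t ≤ -(lam * ψ t) := by
    intro t
    have h0 := hLMI (Sum.elim (x t) (Sum.elim (w t) (d t)))
    set z : (Fin n ⊕ (Fin nw ⊕ Fin nd)) → ℝ := Sum.elim (x t) (Sum.elim (w t) (d t)) with hz
    set H : Matrix (Fin nv ⊕ Fin nw) (Fin n ⊕ (Fin nw ⊕ Fin nd)) ℝ :=
      fromBlocks Cv (fromCols Dvw Dvd) 0 (fromCols 1 0) with hH
    have hHz : H *ᵥ z = Sum.elim (v t) (w t) := by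
      rw [hH, hz, H_mulVec, hv t, add_assoc]
    have hN : z ⬝ᵥ (Hᵀ * M * H) *ᵥ z = ψ t := by
      rw [← mulVec_mulVec, ← mulVec_mulVec, dotProduct_mulVec, vecMul_transpose, hHz, hψdef]
    have hF : z ⬝ᵥ (fromBlocks (Aᵀ * P + P * A) (fromCols (P * Bw) (P * Bd))
        (fromRows (Bwᵀ * P) (Bdᵀ * P)) 0) *ᵥ z = g t := by
      rw [hz]
      exact F0_quad A Bw Bd P (x t) (w t) (d t)
    simp only [Matrix.mul_zero, Matrix.zero_mul, sub_zero, add_mulVec, dotProduct_add,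
      smul_mulVec, dotProduct_smul, smul_eq_mul] at h0
    rw [hF, hN] at h0
    linarith
  -- FTC and integral comparison
  have hsub : Set.Icc (0:ℝ) T ⊆ Set.Ici 0 := fun s hs => hs.1
  have hgint : IntervalIntegrable g MeasureTheory.volume 0 T := by
    apply ContinuousOn.intervalIntegrable
    rw [Set.uIcc_of_le hT]
    exact hgc.mono hsub
  have hbint : IntervalIntegrable (fun t => -(lam * ψ t)) MeasureTheory.volume 0 T := by
    apply ContinuousOn.intervalIntegrable
    rw [Set.uIcc_of_le hT]
    exact ((continuousOn_const.mul (hψc.mono hsub)).neg)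
  have hFTC : ∫ t in (0:ℝ)..T, g t = φ T - φ 0 := by
    apply intervalIntegral.integral_eq_sub_of_hasDeriv_right_of_le hT
    · exact ((hquadc P).comp_continuousOn (hxc.prodMk hxc)).mono hsub
    · intro s hs
      exact (hφderiv s (le_of_lt hs.1)).mono (Set.Ioi_subset_Ici (le_of_lt hs.1))
    · exact hgint
  have hmono : ∫ t in (0:ℝ)..T, g t ≤ ∫ t in (0:ℝ)..T, -(lam * ψ t) :=
    intervalIntegral.integral_mono_on hT hgint hbint (fun s _ => key s)
  have hbeq : ∫ t in (0:ℝ)..T, -(lam * ψ t) = -(lam * ∫ t in (0:ℝ)..T, ψ t) := by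
    rw [intervalIntegral.integral_neg, intervalIntegral.integral_const_mul]
  have hIQCT := hIQC T hT
  have hψint : (0:ℝ) ≤ ∫ t in (0:ℝ)..T, ψ t := hIQCT
  have : φ T - φ 0 ≤ 0 := by
    rw [← hFTC]
    calc ∫ t in (0:ℝ)..T, g t ≤ -(lam * ∫ t in (0:ℝ)..T, ψ t) := by rw [← hbeq]; exact hmono
    _ ≤ 0 := by
        have := mul_nonneg hlam hψint
        linarith
  have hgoal : φ T ≤ φ 0 := by linarith
  exact hgoal
end

section
/- Consider an uncertain LTI system with matrices A, B_w, B_d, C_v, D_vw, D_vd, C_e, D_ew, D_ed, and IQC filters Ψ₁ with state-space realization (A_ψ₁, B_ψ₁, C_ψ₁, D_ψ₁) and Ψ₂ with realization (A_ψ₂, B_ψ₂, C_ψ₂, D_ψ₂), where D_ψ₂ is invertible. Define the extended matrices Ã = [[A, 0, 0], [B_ψ₁ C_v, A_ψ₁, 0], [0, 0, A_ψ₂]], B̃_w = [[B_w], [B_ψ₁ D_vw], [B_ψ₂]], B̃_d = [[B_d], [B_ψ₁ D_vd], [0]], C̃_v = [D_ψ₁ C_v, C_ψ₁, 0], D̃_vw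 = D_ψ₁ D_vw, D̃_vd = D_ψ₁ D_vd, C̃_e = [C_e, 0, 0], D̃_ew = D_ew, D̃_ed = D_ed, and the transformation matrix T = [[I, 0, 0], [[0, 0, −D_ψ₂⁻¹C_ψ₂], D_ψ₂⁻¹, 0], [0, 0, I]]. Suppose a symmetric positive semidefinite P (acting on the extended state x̃ = (x, ψ₁, ψ₂)) and λ ≥ 0 satisfy the dissipativity LMI condition for the transformed system matrices [Ã, B̃_w, B̃_d; C̃_v, D̃_vw, D̃_vd; C̃_e, D̃_ew, D̃_ed]·T, with multiplier M = diag(I, −I) and supply-rate matrix X. Then for every extended admissible trajectory, i.e., continuously differentiable x, ψ₁, ψ₂ and continuous w, d with x'(t) = A x(t) + B_w w(t) + B_d d(t), ψ₁'(t) = A_ψ₁ ψ₁(t) + B_ψ₁ v(t), ψ₂'(t) = A_ψ₂ ψ₂(t) + B_ψ₂ w(t), ψ₁(0) = 0, ψ₂(0) = 0, where v(t) = C_v x(t) + D_vw w(t) + D_vd d(t), e(t) = C_e x(t) + D_ew w(t) + D_ed d(t), ṽ(t) = C_ψ₁ ψ₁(t) + D_ψ₁ v(t), w̃(t) = C_ψ₂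 ψ₂(t) + D_ψ₂ w(t), such that the dynamic IQC holds, namely ∫₀ᵀ (‖ṽ(t)‖² − ‖w̃(t)‖²) dt ≥ 0 for all T ≥ 0, one has x̃(T)ᵀ P x̃(T) − x̃(0)ᵀ P x̃(0) ≤ ∫₀ᵀ [d(t); e(t)]ᵀ X [d(t); e(t)] dt for all T ≥ 0, where x̃(t) = (x(t), ψ₁(t), ψ₂(t)). Thus the original system is dissipative with respect to the supply rate defined by X, with storage function defined on the state consisting of the plant state and the virtual filter state. -/
open Matrix

section Helpers
open Matrix

lemma helper_hasDerivWithinAt_mulVec {ι κ : Type*} [Fintype ι] [Fintype κ]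
    (M : Matrix κ ι ℝ) {u : ℝ → ι → ℝ} {u' : ι → ℝ} {s : Set ℝ} {t : ℝ}
    (hu : HasDerivWithinAt u u' s t) :
    HasDerivWithinAt (fun t => M *ᵥ u t) (M *ᵥ u') s t := by
  rw [hasDerivWithinAt_pi] at hu ⊢
  intro i
  simpa [Matrix.mulVec, dotProduct] using
    HasDerivWithinAt.fun_sum (fun j (_ : j ∈ Finset.univ) => ((hu j).const_mul (M i j)))

lemma helper_hasDerivWithinAt_dotProduct {ι : Type*} [Fintype ι]
    {u v : ℝ → ι → ℝ} {u' v' : ι → ℝ} {s : Set ℝ} {t : ℝ}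
    (hu : HasDerivWithinAt u u' s t) (hv : HasDerivWithinAt v v' s t) :
    HasDerivWithinAt (fun t => u t ⬝ᵥ v t) (u' ⬝ᵥ v t + u t ⬝ᵥ v') s t := by
  simp only [dotProduct]
  have := HasDerivWithinAt.fun_sum (fun i (_ : i ∈ Finset.univ) =>
    ((hasDerivWithinAt_pi.1 hu i).mul (hasDerivWithinAt_pi.1 hv i)))
  simpa [Finset.sum_add_distrib] using this

lemma helper_continuousOn_mulVec {ι κ : Type*} [Fintype ι] [Fintype κ]
    (M : Matrix κ ι ℝ) {u : ℝ → ι → ℝ} {s : Set ℝ}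
    (hu : ContinuousOn u s) : ContinuousOn (fun t => M *ᵥ u t) s := by
  rw [continuousOn_pi] at hu ⊢
  intro i
  simp only [Matrix.mulVec, dotProduct]
  exact continuousOn_finset_sum _ fun j _ => (continuousOn_const.mul (hu j))

lemma helper_continuousOn_dotProduct {ι : Type*} [Fintype ι]
    {u v : ℝ → ι → ℝ} {s : Set ℝ}
    (hu : ContinuousOn u s) (hv : ContinuousOn v s) :
    ContinuousOn (fun t => u t ⬝ᵥ v t) s := by
  simp only [dotProduct]
  exact continuousOn_finset_sum _ fun i _ =>
    ((continuousOn_pi.1 hu i).mul (continuousOn_pi.1 hv i))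

lemma helper_dot_transpose {ι κ : Type*} [Fintype ι] [Fintype κ]
    (u : ι → ℝ) (M : Matrix κ ι ℝ) (v : κ → ℝ) :
    u ⬝ᵥ Mᵀ *ᵥ v = (M *ᵥ u) ⬝ᵥ v := by
  rw [Matrix.dotProduct_mulVec, Matrix.vecMul_transpose]

lemma helper_quad {k l : Type*} [Fintype k] [Fintype l]
    (H : Matrix k l ℝ) (M : Matrix k k ℝ) (z : l → ℝ) :
    z ⬝ᵥ (Hᵀ * M * H) *ᵥ z = (H *ᵥ z) ⬝ᵥ M *ᵥ (H *ᵥ z) := by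
  rw [Matrix.mul_assoc, ← Matrix.mulVec_mulVec, helper_dot_transpose, ← Matrix.mulVec_mulVec]

lemma helper_quadF0 {ιn ιw ιd : Type*} [Fintype ιn] [Fintype ιw] [Fintype ιd]
    (A1 : Matrix ιn ιn ℝ) (B1 : Matrix ιn ιw ℝ) (B2 : Matrix ιn ιd ℝ)
    (P : Matrix ιn ιn ℝ) (a : ιn → ℝ) (b : ιw → ℝ) (c : ιd → ℝ) :
    (a ⊕ᵥ (b ⊕ᵥ c)) ⬝ᵥ
      (fromBlocks (A1ᵀ * P + P * A1) (fromCols (P * B1) (P * B2))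
        (fromRows (B1ᵀ * P) (B2ᵀ * P)) 0) *ᵥ (a ⊕ᵥ (b ⊕ᵥ c)) =
    (A1 *ᵥ a + B1 *ᵥ b + B2 *ᵥ c) ⬝ᵥ P *ᵥ a + a ⬝ᵥ P *ᵥ (A1 *ᵥ a + B1 *ᵥ b + B2 *ᵥ c) := by
  simp only [fromBlocks_mulVec, Sum.elim_comp_inl, Sum.elim_comp_inr,
    fromCols_mulVec_sumElim, fromRows_mulVec, zero_mulVec, add_zero,
    sumElim_dotProduct_sumElim, Matrix.add_mulVec, ← Matrix.mulVec_mulVec,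
    dotProduct_add, add_dotProduct, helper_dot_transpose, Matrix.mulVec_add,
    Pi.add_apply]
  ring

end Helpers

/-- dissipativity via dynamic IQCs. If the dissipativity LMI holds
for the extended and transformed system (extended with the filters `Ψ₁`, `Ψ₂`
and transformed by `T`), with multiplier `M = diag(I, −I)`, then the original
system with uncertainty satisfying the dynamic IQC is dissipative with respect
to the supply rate defined by `X`, with storage on the extended state. -/
theorem statement5 {n nw nd nv ne np1 np2 nz : ℕ}
    (A : Matrix (Fin n) (Fin n) ℝ) (Bw : Matrix (Fin n) (Fin nw) ℝ)
    (Bd : Matrix (Fin n) (Fin nd) ℝ)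
    (Cv : Matrix (Fin nv) (Fin n) ℝ) (Dvw : Matrix (Fin nv) (Fin nw) ℝ)
    (Dvd : Matrix (Fin nv) (Fin nd) ℝ)
    (Ce : Matrix (Fin ne) (Fin n) ℝ) (Dew : Matrix (Fin ne) (Fin nw) ℝ)
    (Ded : Matrix (Fin ne) (Fin nd) ℝ)
    (Aψ1 : Matrix (Fin np1) (Fin np1) ℝ) (Bψ1 : Matrix (Fin np1) (Fin nv) ℝ)
    (Cψ1 : Matrix (Fin nz) (Fin np1) ℝ) (Dψ1 : Matrix (Fin nz) (Fin nv) ℝ)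
    (Aψ2 : Matrix (Fin np2) (Fin np2) ℝ) (Bψ2 : Matrix (Fin np2) (Fin nw) ℝ)
    (Cψ2 : Matrix (Fin nw) (Fin np2) ℝ) (Dψ2 : Matrix (Fin nw) (Fin nw) ℝ)
    (hD2 : IsUnit Dψ2.det)
    (P : Matrix (Fin n ⊕ (Fin np1 ⊕ Fin np2)) (Fin n ⊕ (Fin np1 ⊕ Fin np2)) ℝ)
    (lam : ℝ) (X : Matrix (Fin nd ⊕ Fin ne) (Fin nd ⊕ Fin ne) ℝ)
    (hP : P.PosSemidef) (hlam : 0 ≤ lam) (hX : X.IsSymm)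
    (hLMI :
      let Atil : Matrix (Fin n ⊕ (Fin np1 ⊕ Fin np2)) (Fin n ⊕ (Fin np1 ⊕ Fin np2)) ℝ :=
        fromBlocks A 0 (fromRows (Bψ1 * Cv) 0) (fromBlocks Aψ1 0 0 Aψ2)
      let Bwtil : Matrix (Fin n ⊕ (Fin np1 ⊕ Fin np2)) (Fin nw) ℝ :=
        fromRows Bw (fromRows (Bψ1 * Dvw) Bψ2)
      let Bdtil : Matrix (Fin n ⊕ (Fin np1 ⊕ Fin np2)) (Fin nd) ℝ :=
        fromRows Bd (fromRows (Bψ1 * Dvd) 0)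
      let Cvtil : Matrix (Fin nz) (Fin n ⊕ (Fin np1 ⊕ Fin np2)) ℝ :=
        fromCols (Dψ1 * Cv) (fromCols Cψ1 0)
      let Cetil : Matrix (Fin ne) (Fin n ⊕ (Fin np1 ⊕ Fin np2)) ℝ :=
        fromCols Ce 0
      let J : Matrix (Fin nw) (Fin n ⊕ (Fin np1 ⊕ Fin np2)) ℝ :=
        fromCols 0 (fromCols 0 (-(Dψ2⁻¹ * Cψ2)))
      DissLMI (Atil + Bwtil * J) (Bwtil * Dψ2⁻¹) Bdtil
        (Cvtil + (Dψ1 * Dvw) * J) ((Dψ1 * Dvw) * Dψ2⁻¹) (Dψ1 * Dvd)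
        (Cetil + Dew * J) (Dew * Dψ2⁻¹) Ded P lam
        (fromBlocks (1 : Matrix (Fin nz) (Fin nz) ℝ) 0 0
          (-(1 : Matrix (Fin nw) (Fin nw) ℝ))) X)
    (x : ℝ → Fin n → ℝ) (ψ1 : ℝ → Fin np1 → ℝ) (ψ2 : ℝ → Fin np2 → ℝ)
    (w : ℝ → Fin nw → ℝ) (d : ℝ → Fin nd → ℝ)
    (v : ℝ → Fin nv → ℝ) (e : ℝ → Fin ne → ℝ)
    (vtil : ℝ → Fin nz → ℝ) (wtil : ℝ → Fin nw → ℝ)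
    (hw : ContinuousOn w (Set.Ici 0)) (hd : ContinuousOn d (Set.Ici 0))
    (hx : ∀ t ∈ Set.Ici (0:ℝ),
      HasDerivWithinAt x (A *ᵥ x t + Bw *ᵥ w t + Bd *ᵥ d t) (Set.Ici 0) t)
    (hψ1 : ∀ t ∈ Set.Ici (0:ℝ),
      HasDerivWithinAt ψ1 (Aψ1 *ᵥ ψ1 t + Bψ1 *ᵥ v t) (Set.Ici 0) t)
    (hψ2 : ∀ t ∈ Set.Ici (0:ℝ),
      HasDerivWithinAt ψ2 (Aψ2 *ᵥ ψ2 t + Bψ2 *ᵥ w t) (Set.Ici 0) t)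
    (hψ10 : ψ1 0 = 0) (hψ20 : ψ2 0 = 0)
    (hv : ∀ t, v t = Cv *ᵥ x t + Dvw *ᵥ w t + Dvd *ᵥ d t)
    (he : ∀ t, e t = Ce *ᵥ x t + Dew *ᵥ w t + Ded *ᵥ d t)
    (hvtil : ∀ t, vtil t = Cψ1 *ᵥ ψ1 t + Dψ1 *ᵥ v t)
    (hwtil : ∀ t, wtil t = Cψ2 *ᵥ ψ2 t + Dψ2 *ᵥ w t)
    (hIQC : ∀ T, 0 ≤ T →
      0 ≤ ∫ t in (0:ℝ)..T, (vtil t ⬝ᵥ vtil t - wtil t ⬝ᵥ wtil t)) :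
    ∀ T, 0 ≤ T →
      Sum.elim (x T) (Sum.elim (ψ1 T) (ψ2 T)) ⬝ᵥ
          P *ᵥ Sum.elim (x T) (Sum.elim (ψ1 T) (ψ2 T))
        - Sum.elim (x 0) (Sum.elim (ψ1 0) (ψ2 0)) ⬝ᵥ
            P *ᵥ Sum.elim (x 0) (Sum.elim (ψ1 0) (ψ2 0)) ≤
        ∫ t in (0:ℝ)..T, Sum.elim (d t) (e t) ⬝ᵥ X *ᵥ Sum.elim (d t) (e t) := by
  classical
  let xt : ℝ → (Fin n ⊕ (Fin np1 ⊕ Fin np2)) → ℝ :=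
    fun t => Sum.elim (x t) (Sum.elim (ψ1 t) (ψ2 t))
  let xd : ℝ → (Fin n ⊕ (Fin np1 ⊕ Fin np2)) → ℝ :=
    fun t => Sum.elim (A *ᵥ x t + Bw *ᵥ w t + Bd *ᵥ d t)
      (Sum.elim (Aψ1 *ᵥ ψ1 t + Bψ1 *ᵥ v t) (Aψ2 *ᵥ ψ2 t + Bψ2 *ᵥ w t))
  have hxt : ∀ t ∈ Set.Ici (0:ℝ), HasDerivWithinAt xt (xd t) (Set.Ici 0) t := by
    intro t ht
    rw [hasDerivWithinAt_pi]
    rintro (i | j | k)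
    · exact hasDerivWithinAt_pi.1 (hx t ht) i
    · exact hasDerivWithinAt_pi.1 (hψ1 t ht) j
    · exact hasDerivWithinAt_pi.1 (hψ2 t ht) k
  -- inverse cancellation
  have hwinv : ∀ t, Dψ2⁻¹ *ᵥ wtil t = Dψ2⁻¹ *ᵥ (Cψ2 *ᵥ ψ2 t) + w t := by
    intro t
    rw [hwtil]
    simp [Matrix.mulVec_add, Matrix.mulVec_mulVec, Matrix.nonsing_inv_mul _ hD2]
  -- the transformed matrices
  set Atil : Matrix (Fin n ⊕ (Fin np1 ⊕ Fin np2)) (Fin n ⊕ (Fin np1 ⊕ Fin np2)) ℝ :=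
    fromBlocks A 0 (fromRows (Bψ1 * Cv) 0) (fromBlocks Aψ1 0 0 Aψ2) with hAtil
  set Bwtil : Matrix (Fin n ⊕ (Fin np1 ⊕ Fin np2)) (Fin nw) ℝ :=
    fromRows Bw (fromRows (Bψ1 * Dvw) Bψ2) with hBwtil
  set Bdtil : Matrix (Fin n ⊕ (Fin np1 ⊕ Fin np2)) (Fin nd) ℝ :=
    fromRows Bd (fromRows (Bψ1 * Dvd) 0) with hBdtil
  set Cvtil : Matrix (Fin nz) (Fin n ⊕ (Fin np1 ⊕ Fin np2)) ℝ :=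
    fromCols (Dψ1 * Cv) (fromCols Cψ1 0) with hCvtil
  set Cetil : Matrix (Fin ne) (Fin n ⊕ (Fin np1 ⊕ Fin np2)) ℝ :=
    fromCols Ce 0 with hCetil
  set J : Matrix (Fin nw) (Fin n ⊕ (Fin np1 ⊕ Fin np2)) ℝ :=
    fromCols 0 (fromCols 0 (-(Dψ2⁻¹ * Cψ2))) with hJ
  -- state derivative identity
  have hzdot : ∀ t, (Atil + Bwtil * J) *ᵥ xt t + (Bwtil * Dψ2⁻¹) *ᵥ wtil t
      + Bdtil *ᵥ d t = xd t := by
    intro t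
    funext i
    simp only [hAtil, hBwtil, hBdtil, hJ, xt, xd, Matrix.add_mulVec,
      ← Matrix.mulVec_mulVec, hwinv t, fromBlocks_mulVec, fromRows_mulVec,
      fromCols_mulVec_sumElim, Sum.elim_comp_inl, Sum.elim_comp_inr,
      Matrix.mulVec_add, Matrix.zero_mulVec, Matrix.mulVec_zero,
      Matrix.neg_mulVec, hv t]
    rcases i with i | j | k <;>
      simp [Pi.add_apply, Pi.neg_apply, Matrix.mulVec_neg, ← Matrix.mulVec_mulVec] <;> ring
  -- filter output identity
  have hHz : ∀ t, (Cvtil + (Dψ1 * Dvw) * J) *ᵥ xt t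
      + ((Dψ1 * Dvw) * Dψ2⁻¹) *ᵥ wtil t + (Dψ1 * Dvd) *ᵥ d t = vtil t := by
    intro t
    funext i
    simp only [hCvtil, hJ, xt, Matrix.add_mulVec, ← Matrix.mulVec_mulVec,
      hwinv t, fromCols_mulVec_sumElim, Matrix.mulVec_add,
      Matrix.zero_mulVec, Matrix.mulVec_zero, Matrix.neg_mulVec,
      Matrix.mulVec_neg, hvtil t, hv t]
    simp [Pi.add_apply, Pi.neg_apply, Matrix.mulVec_add]
    ring
  -- error output identity
  have hGe : ∀ t, (Cetil + Dew * J) *ᵥ xt t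
      + (Dew * Dψ2⁻¹) *ᵥ wtil t + Ded *ᵥ d t = e t := by
    intro t
    funext i
    simp only [hCetil, hJ, xt, Matrix.add_mulVec, ← Matrix.mulVec_mulVec,
      hwinv t, fromCols_mulVec_sumElim, Matrix.mulVec_add,
      Matrix.zero_mulVec, Matrix.mulVec_zero, Matrix.neg_mulVec,
      Matrix.mulVec_neg, he t]
    simp [Pi.add_apply, Pi.neg_apply, Matrix.mulVec_add]
  have hH : ∀ t, (fromBlocks (Cvtil + (Dψ1 * Dvw) * J)
        (fromCols ((Dψ1 * Dvw) * Dψ2⁻¹) (Dψ1 * Dvd)) 0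
        (fromCols (1 : Matrix (Fin nw) (Fin nw) ℝ) 0)) *ᵥ
        (xt t ⊕ᵥ (wtil t ⊕ᵥ d t)) = vtil t ⊕ᵥ wtil t := by
    intro t
    rw [← hHz t]
    funext i
    rcases i with i | j <;>
      simp [fromBlocks_mulVec, fromCols_mulVec_sumElim, Sum.elim_comp_inl,
        Sum.elim_comp_inr, Matrix.zero_mulVec, Matrix.one_mulVec,
        Matrix.mulVec_zero, add_assoc]
  have hG : ∀ t, (fromBlocks 0 (fromCols 0 (1 : Matrix (Fin nd) (Fin nd) ℝ))
        (Cetil + Dew * J) (fromCols (Dew * Dψ2⁻¹) Ded)) *ᵥ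
        (xt t ⊕ᵥ (wtil t ⊕ᵥ d t)) = d t ⊕ᵥ e t := by
    intro t
    rw [← hGe t]
    funext i
    rcases i with i | j <;>
      simp [fromBlocks_mulVec, fromCols_mulVec_sumElim, Sum.elim_comp_inl,
        Sum.elim_comp_inr, Matrix.zero_mulVec, Matrix.one_mulVec,
        Matrix.mulVec_zero, add_assoc]
  have hkey : ∀ t, xd t ⬝ᵥ P *ᵥ xt t + xt t ⬝ᵥ P *ᵥ xd t
      ≤ Sum.elim (d t) (e t) ⬝ᵥ X *ᵥ Sum.elim (d t) (e t)
        - lam * (vtil t ⬝ᵥ vtil t - wtil t ⬝ᵥ wtil t) := by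
    intro t
    have hzdot' : Atil *ᵥ xt t + (Bwtil * J) *ᵥ xt t
        + (Bwtil * Dψ2⁻¹) *ᵥ wtil t + Bdtil *ᵥ d t = xd t := by
      rw [← hzdot t, Matrix.add_mulVec]
    have h0 := hLMI (xt t ⊕ᵥ (wtil t ⊕ᵥ d t))
    simp only [Matrix.sub_mulVec, Matrix.add_mulVec, Matrix.smul_mulVec,
      dotProduct_sub, dotProduct_add, dotProduct_smul, smul_eq_mul,
      helper_quadF0, helper_quad, hzdot', hH t, hG t] at h0
    simp only [fromBlocks_mulVec, Sum.elim_comp_inl, Sum.elim_comp_inr,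
      sumElim_dotProduct_sumElim, Matrix.one_mulVec, Matrix.zero_mulVec,
      Matrix.neg_mulVec, Matrix.mulVec_neg, zero_add, add_zero,
      dotProduct_neg, neg_dotProduct] at h0
    linarith
  -- continuity of signals
  have hxc : ContinuousOn x (Set.Ici 0) := fun t ht => (hx t ht).continuousWithinAt
  have hψ1c : ContinuousOn ψ1 (Set.Ici 0) := fun t ht => (hψ1 t ht).continuousWithinAt
  have hψ2c : ContinuousOn ψ2 (Set.Ici 0) := fun t ht => (hψ2 t ht).continuousWithinAt
  have hvc : ContinuousOn v (Set.Ici 0) := by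
    have hveq : v = fun t => Cv *ᵥ x t + Dvw *ᵥ w t + Dvd *ᵥ d t := funext hv
    rw [hveq]
    exact ((helper_continuousOn_mulVec Cv hxc).add
      (helper_continuousOn_mulVec Dvw hw)).add (helper_continuousOn_mulVec Dvd hd)
  have hec : ContinuousOn e (Set.Ici 0) := by
    have heeq : e = fun t => Ce *ᵥ x t + Dew *ᵥ w t + Ded *ᵥ d t := funext he
    rw [heeq]
    exact ((helper_continuousOn_mulVec Ce hxc).add
      (helper_continuousOn_mulVec Dew hw)).add (helper_continuousOn_mulVec Ded hd)
  have hvtilc : ContinuousOn vtil (Set.Ici 0) := by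
    have : vtil = fun t => Cψ1 *ᵥ ψ1 t + Dψ1 *ᵥ v t := funext hvtil
    rw [this]
    exact (helper_continuousOn_mulVec Cψ1 hψ1c).add (helper_continuousOn_mulVec Dψ1 hvc)
  have hwtilc : ContinuousOn wtil (Set.Ici 0) := by
    have : wtil = fun t => Cψ2 *ᵥ ψ2 t + Dψ2 *ᵥ w t := funext hwtil
    rw [this]
    exact (helper_continuousOn_mulVec Cψ2 hψ2c).add (helper_continuousOn_mulVec Dψ2 hw)
  have hxtc : ContinuousOn xt (Set.Ici 0) := by
    rw [continuousOn_pi]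
    rintro (i | j | k)
    · exact continuousOn_pi.1 hxc i
    · exact continuousOn_pi.1 hψ1c j
    · exact continuousOn_pi.1 hψ2c k
  have hxdc : ContinuousOn xd (Set.Ici 0) := by
    rw [continuousOn_pi]
    rintro (i | j | k)
    · exact continuousOn_pi.1 (((helper_continuousOn_mulVec A hxc).add
        (helper_continuousOn_mulVec Bw hw)).add (helper_continuousOn_mulVec Bd hd)) i
    · exact continuousOn_pi.1 ((helper_continuousOn_mulVec Aψ1 hψ1c).add
        (helper_continuousOn_mulVec Bψ1 hvc)) j
    · exact continuousOn_pi.1 ((helper_continuousOn_mulVec Aψ2 hψ2c).add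
        (helper_continuousOn_mulVec Bψ2 hw)) k
  have hdec : ContinuousOn (fun t => Sum.elim (d t) (e t)) (Set.Ici (0:ℝ)) := by
    rw [continuousOn_pi]
    rintro (i | j)
    · exact continuousOn_pi.1 hd i
    · exact continuousOn_pi.1 hec j
  -- storage function and derivative
  set V : ℝ → ℝ := fun t => xt t ⬝ᵥ P *ᵥ xt t with hVdef
  set Vd : ℝ → ℝ := fun t => xd t ⬝ᵥ P *ᵥ xt t + xt t ⬝ᵥ P *ᵥ xd t with hVddef
  have hV : ∀ t ∈ Set.Ici (0:ℝ), HasDerivWithinAt V (Vd t) (Set.Ici 0) t := fun t ht =>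
    helper_hasDerivWithinAt_dotProduct (hxt t ht) (helper_hasDerivWithinAt_mulVec P (hxt t ht))
  have hVc : ContinuousOn V (Set.Ici 0) :=
    helper_continuousOn_dotProduct hxtc (helper_continuousOn_mulVec P hxtc)
  have hVdc : ContinuousOn Vd (Set.Ici 0) :=
    (helper_continuousOn_dotProduct hxdc (helper_continuousOn_mulVec P hxtc)).add
      (helper_continuousOn_dotProduct hxtc (helper_continuousOn_mulVec P hxdc))
  set sX : ℝ → ℝ := fun t => Sum.elim (d t) (e t) ⬝ᵥ X *ᵥ Sum.elim (d t) (e t) with hsXdef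
  set q : ℝ → ℝ := fun t => vtil t ⬝ᵥ vtil t - wtil t ⬝ᵥ wtil t with hqdef
  have hsXc : ContinuousOn sX (Set.Ici 0) :=
    helper_continuousOn_dotProduct hdec (helper_continuousOn_mulVec X hdec)
  have hqc : ContinuousOn q (Set.Ici 0) :=
    (helper_continuousOn_dotProduct hvtilc hvtilc).sub
      (helper_continuousOn_dotProduct hwtilc hwtilc)
  -- main argument
  intro T hT
  have hIcc : Set.Icc (0:ℝ) T ⊆ Set.Ici 0 := Set.Icc_subset_Ici_self
  have huIcc : Set.uIcc (0:ℝ) T = Set.Icc 0 T := Set.uIcc_of_le hT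
  have hVdInt : IntervalIntegrable Vd MeasureTheory.volume 0 T :=
    ((hVdc.mono hIcc).mono (le_of_eq huIcc)).intervalIntegrable
  have hsXInt : IntervalIntegrable sX MeasureTheory.volume 0 T :=
    ((hsXc.mono hIcc).mono (le_of_eq huIcc)).intervalIntegrable
  have hqInt : IntervalIntegrable q MeasureTheory.volume 0 T :=
    ((hqc.mono hIcc).mono (le_of_eq huIcc)).intervalIntegrable
  have hftc : ∫ t in (0:ℝ)..T, Vd t = V T - V 0 :=
    intervalIntegral.integral_eq_sub_of_hasDeriv_right_of_le hT (hVc.mono hIcc)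
      (fun t ht => (hV t (Set.mem_of_mem_of_subset (Set.mem_Icc_of_Ioo ht) hIcc)).mono
        (Set.Ioi_subset_Ici_self.trans (Set.Ici_subset_Ici.2 ht.1.le)))
      hVdInt
  have hmono : ∫ t in (0:ℝ)..T, Vd t ≤ ∫ t in (0:ℝ)..T, (sX t - lam * q t) :=
    intervalIntegral.integral_mono_on hT hVdInt (hsXInt.sub (hqInt.const_mul lam))
      (fun t _ => hkey t)
  have hsplit : ∫ t in (0:ℝ)..T, (sX t - lam * q t)
      = (∫ t in (0:ℝ)..T, sX t) - lam * ∫ t in (0:ℝ)..T, q t := by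
    rw [intervalIntegral.integral_sub hsXInt (hqInt.const_mul lam),
      intervalIntegral.integral_const_mul]
  have hfin : V T - V 0 ≤ ∫ t in (0:ℝ)..T, sX t := by
    have h1 : 0 ≤ lam * ∫ t in (0:ℝ)..T, q t := mul_nonneg hlam (hIQC T hT)
    rw [← hftc]
    rw [hsplit] at hmono
    linarith
  exact hfin
end

section
/- Let R, S ∈ ℝ^{n×n} be symmetric matrices such that the block matrix [[R, I], [I, S]] is positive definite (which implies R ≻ 0 and S ≻ 0). Then the matrix I − R S is invertible. -/
open Matrix

lemma blockPosDef_left {n : ℕ} {R S : Matrix (Fin n) (Fin n) ℝ}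
    (hR : R.IsSymm)
    (hblk : (fromBlocks R (1 : Matrix (Fin n) (Fin n) ℝ)
      (1 : Matrix (Fin n) (Fin n) ℝ) S).PosDef) : R.PosDef := by
  refine posDef_iff_dotProduct_mulVec.mpr ⟨hR, fun x hx => ?_⟩
  have hx' : (Sum.elim x 0 : Fin n ⊕ Fin n → ℝ) ≠ 0 := by
    intro h
    apply hx
    funext i
    exact congrFun h (Sum.inl i)
  have := hblk.dotProduct_mulVec_pos hx'
  simpa [fromBlocks_mulVec, dotProduct] using this

/-- if `[[R, I], [I, S]]` is positive definite (with `R`, `S`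
symmetric), then `I − R S` is invertible. -/
theorem statement9 {n : ℕ} (R S : Matrix (Fin n) (Fin n) ℝ)
    (hR : R.IsSymm) (hS : S.IsSymm)
    (hblk : (fromBlocks R (1 : Matrix (Fin n) (Fin n) ℝ)
      (1 : Matrix (Fin n) (Fin n) ℝ) S).PosDef) :
    IsUnit (1 - R * S) := by
  have hRpd : R.PosDef := blockPosDef_left hR hblk
  haveI := hRpd.isUnit.invertible
  have hdetblk : 0 < (fromBlocks R (1 : Matrix (Fin n) (Fin n) ℝ)
      (1 : Matrix (Fin n) (Fin n) ℝ) S).det := hblk.det_pos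
  rw [det_fromBlocks₁₁] at hdetblk
  have hRdet : 0 < R.det := hRpd.det_pos
  have hSchur : (S - 1 * ⅟R * 1).det ≠ 0 := by
    intro h
    rw [h, mul_zero] at hdetblk
    exact lt_irrefl 0 hdetblk
  have hfac : (1 : Matrix (Fin n) (Fin n) ℝ) - R * S = R * (⅟R - S) := by
    rw [Matrix.mul_sub, mul_invOf_self]
  rw [hfac]
  apply IsUnit.mul hRpd.isUnit
  rw [Matrix.isUnit_iff_isUnit_det, isUnit_iff_ne_zero]
  intro h
  apply hSchur
  have : (⅟R - S) = -(S - 1 * ⅟R * 1) := by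
    simp [neg_sub]
  rw [this, det_neg] at h
  rcases mul_eq_zero.mp h with h1 | h2
  · simp at h1
  · exact h2
end

section
/- Let P ∈ ℝ^{2n×2n} be a symmetric invertible matrix, partitioned as P = [[S, U], [Uᵀ, P₂₂]] and P⁻¹ = [[R, V], [Vᵀ, Q₂₂]] with all blocks n×n. Define Y = [[R, I], [Vᵀ, 0]]. Then P Y = [[I, S], [0, Uᵀ]] and Yᵀ P Y = [[R, I], [I, S]]. In particular, if P is positive definite then [[R, I], [I, S]] is positive semidefinite, and it is positive definite whenever Y is invertible. -/
open Matrix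

/-- for a symmetric invertible `P = [[S, U], [Uᵀ, P₂₂]]` with
inverse `P⁻¹ = [[R, V], [Vᵀ, Q₂₂]]` and `Y = [[R, I], [Vᵀ, 0]]`, one has
`P Y = [[I, S], [0, Uᵀ]]` and `Yᵀ P Y = [[R, I], [I, S]]`; moreover if `P ≻ 0`
then `[[R, I], [I, S]] ⪰ 0`, and `[[R, I], [I, S]] ≻ 0` whenever `Y` is
invertible. -/
theorem statement10 {n : ℕ} (S U P22 R V Q22 : Matrix (Fin n) (Fin n) ℝ)
    (hS : S.IsSymm) (hP22 : P22.IsSymm) (hR : R.IsSymm) (hQ22 : Q22.IsSymm)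
    (hInv : fromBlocks S U Uᵀ P22 * fromBlocks R V Vᵀ Q22 = 1) :
    fromBlocks S U Uᵀ P22 * fromBlocks R (1 : Matrix (Fin n) (Fin n) ℝ) Vᵀ 0 =
      fromBlocks 1 S 0 Uᵀ ∧
    (fromBlocks R (1 : Matrix (Fin n) (Fin n) ℝ) Vᵀ 0)ᵀ *
        fromBlocks S U Uᵀ P22 *
        fromBlocks R (1 : Matrix (Fin n) (Fin n) ℝ) Vᵀ 0 =
      fromBlocks R 1 1 S ∧
    ((fromBlocks S U Uᵀ P22).PosDef →
      (fromBlocks R (1 : Matrix (Fin n) (Fin n) ℝ) 1 S).PosSemidef ∧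
      (IsUnit (fromBlocks R (1 : Matrix (Fin n) (Fin n) ℝ) Vᵀ 0) →
        (fromBlocks R (1 : Matrix (Fin n) (Fin n) ℝ) 1 S).PosDef)) := by
  set P := fromBlocks S U Uᵀ P22 with hPdef
  set Y := fromBlocks R (1 : Matrix (Fin n) (Fin n) ℝ) Vᵀ 0 with hYdef
  have hInv' : fromBlocks R V Vᵀ Q22 * P = 1 := mul_eq_one_comm.mp hInv
  rw [hPdef, Matrix.fromBlocks_multiply, ← Matrix.fromBlocks_one] at hInv hInv'
  have h11 : S * R + U * Vᵀ = 1 := congrArg Matrix.toBlocks₁₁ hInv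
  have h21 : Uᵀ * R + P22 * Vᵀ = 0 := congrArg Matrix.toBlocks₂₁ hInv
  have h11' : R * S + V * Uᵀ = 1 := congrArg Matrix.toBlocks₁₁ hInv'
  have h1 : P * Y = fromBlocks 1 S 0 Uᵀ := by
    rw [hPdef, hYdef, Matrix.fromBlocks_multiply]
    simp [h11, h21]
  have hYT : Yᵀ = fromBlocks R V 1 0 := by
    rw [hYdef, Matrix.fromBlocks_transpose, hR.eq, Matrix.transpose_one,
      Matrix.transpose_transpose, Matrix.transpose_zero]
  have h2 : Yᵀ * P * Y = fromBlocks R 1 1 S := by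
    rw [Matrix.mul_assoc, h1, hYT, Matrix.fromBlocks_multiply]
    simp [h11']
  refine ⟨h1, h2, fun hP => ?_⟩
  have hYH : Yᴴ = Yᵀ := by
    ext i j
    simp [Matrix.conjTranspose_apply]
  have hpsd : (fromBlocks R (1 : Matrix (Fin n) (Fin n) ℝ) 1 S).PosSemidef := by
    rw [← h2, ← hYH]
    exact hP.posSemidef.conjTranspose_mul_mul_same Y
  refine ⟨hpsd, fun hY => ?_⟩
  refine Matrix.PosDef.of_dotProduct_mulVec_pos hpsd.isHermitian (fun x hx => ?_)
  have hYx : Y *ᵥ x ≠ 0 := by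
    intro h
    exact hx (Matrix.mulVec_injective_iff_isUnit.mpr hY (by simpa using h))
  have := hP.dotProduct_mulVec_pos hYx
  rw [← h2]
  simpa only [star_mulVec, hYH, Matrix.dotProduct_mulVec, Matrix.vecMul_vecMul] using this
end

section
/- Let φ : ℝ^{n_φ} → ℝ^{n_φ} be applied elementwise, where each scalar component φ_i : ℝ → ℝ is monotone and slope-restricted in [0, 1], i.e., 0 ≤ (φ_i(a) − φ_i(b))(a − b) ≤ (a − b)² for all a, b ∈ ℝ. Let Λ ∈ ℝ^{n_φ×n_φ} be diagonal with positive diagonal entries and let D ∈ ℝ^{n_φ×n_φ} satisfy Λ D + Dᵀ Λ − 2Λ ≺ 0 (negative definite). Then for every b ∈ ℝ^{n_φ}, there is at most one w ∈ ℝ^{n_φ} satisfying the implicit equation w = φ(D w + b). -/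
open Matrix

/-- well-posedness of the implicit layer. If each scalar
nonlinearity is monotone and slope-restricted in `[0, 1]`, `Λ` is diagonal with
positive entries, and `Λ D + Dᵀ Λ − 2Λ ≺ 0`, then the implicit equation
`w = φ(D w + b)` has at most one solution `w` for every `b`. -/
theorem statement13 {nphi : ℕ} (φ : Fin nphi → ℝ → ℝ)
    (hslope : ∀ i a b, 0 ≤ (φ i a - φ i b) * (a - b) ∧
      (φ i a - φ i b) * (a - b) ≤ (a - b) ^ 2)
    (Λ D : Matrix (Fin nphi) (Fin nphi) ℝ)
    (hdiag : ∀ i j, i ≠ j → Λ i j = 0) (hpos : ∀ i, 0 < Λ i i)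
    (hND : ∀ z : Fin nphi → ℝ, z ≠ 0 →
      z ⬝ᵥ (Λ * D + Dᵀ * Λ - (2:ℝ) • Λ) *ᵥ z < 0)
    (b w₁ w₂ : Fin nphi → ℝ)
    (h₁ : ∀ i, w₁ i = φ i ((D *ᵥ w₁ + b) i))
    (h₂ : ∀ i, w₂ i = φ i ((D *ᵥ w₂ + b) i)) :
    w₁ = w₂ := by
  by_contra hne
  set z : Fin nphi → ℝ := w₁ - w₂ with hz
  have hz0 : z ≠ 0 := sub_ne_zero.mpr hne
  set v : Fin nphi → ℝ := D *ᵥ z with hv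
  -- pointwise facts
  have hzi : ∀ i, z i = φ i ((D *ᵥ w₁ + b) i) - φ i ((D *ᵥ w₂ + b) i) := by
    intro i; simp [hz, Pi.sub_apply, h₁ i, h₂ i]
  have hvi : ∀ i, v i = (D *ᵥ w₁ + b) i - (D *ᵥ w₂ + b) i := by
    intro i
    simp [hv, hz, Matrix.mulVec_sub, Pi.sub_apply, Pi.add_apply]
  have key : ∀ i, z i ^ 2 ≤ z i * v i := by
    intro i
    obtain ⟨hlo, hhi⟩ := hslope i ((D *ᵥ w₁ + b) i) ((D *ᵥ w₂ + b) i)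
    rw [← hzi i, ← hvi i] at hlo hhi
    by_cases hvz : v i = 0
    · have hab : (D *ᵥ w₁ + b) i = (D *ᵥ w₂ + b) i := by
        have h := hvi i; rw [hvz] at h; linarith
      have hz0i : z i = 0 := by rw [hzi i, hab]; ring
      simp [hz0i]
    · have hv2 : 0 < v i ^ 2 := by positivity
      nlinarith [mul_le_mul_of_nonneg_left hhi hlo, hv2]
  -- compute the quadratic form
  have hΛd : Λ = Matrix.diagonal (fun i => Λ i i) := by
    ext i j
    by_cases h : i = j
    · subst h; simp
    · simp [Matrix.diagonal_apply_ne _ h, hdiag i j h]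
  have hq : z ⬝ᵥ (Λ * D + Dᵀ * Λ - (2:ℝ) • Λ) *ᵥ z
      = ∑ i, 2 * Λ i i * (z i * v i - z i ^ 2) := by
    rw [Matrix.sub_mulVec, Matrix.add_mulVec, dotProduct_sub, dotProduct_add,
      ← Matrix.mulVec_mulVec, ← Matrix.mulVec_mulVec, Matrix.smul_mulVec,
      dotProduct_smul]
    rw [Matrix.dotProduct_mulVec z Dᵀ, Matrix.vecMul_transpose]
    rw [hΛd]
    simp only [Matrix.mulVec_diagonal, dotProduct, Pi.smul_apply, smul_eq_mul,
      ← hv]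
    rw [Finset.mul_sum, ← Finset.sum_add_distrib, ← Finset.sum_sub_distrib]
    apply Finset.sum_congr rfl
    intro i _
    simp only [Matrix.diagonal_apply_eq]
    ring
  have hge : (0:ℝ) ≤ ∑ i, 2 * Λ i i * (z i * v i - z i ^ 2) := by
    apply Finset.sum_nonneg
    intro i _
    have := key i
    have := (hpos i).le
    nlinarith
  have := hND z hz0
  rw [hq] at this
  linarith
end

section
/- Fix plant matrices A_p, B_pw, B_pd, B_pu, C_pv, D_pvw, D_pvd, D_pvu, C_pe, D_pew, D_ped, D_peu, C_py, D_pyw, D_pyd. The map sending the controller parameter block matrix θ = [[A_k, B_kw, B_ky], [C_kv, D_kvw, D_kvy], [C_ku, D_kuw, D_kuy]] to the closed-loop state-space block matrix [[A, B_w, B_d], [C_v, D_vw, D_vd], [C_e, D_ew, D_ed]] is affine: for all controller parameter matrices θ₁, θ₂ and all t ∈ ℝ, the closed-loop block matrix evaluated at t·θ₁ + (1 − t)·θ₂ equals t times the closed-loop block matrix at θ₁ plus (1 − t) times the closed-loop block matrix at θ₂. -/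
open Matrix

/-- The closed-loop state-space block matrix
`[[A, B_w, B_d], [C_v, D_vw, D_vd], [C_e, D_ew, D_ed]]` of the feedback
interconnection of the plant with the controller whose parameter block matrix is
`θ = [[A_k, B_kw, B_ky], [C_kv, D_kvw, D_kvy], [C_ku, D_kuw, D_kuy]]`. -/
noncomputable def closedLoopBlock {np nk nwp nphi nd nu nvp ne ny : ℕ}
    (Ap : Matrix (Fin np) (Fin np) ℝ) (Bpw : Matrix (Fin np) (Fin nwp) ℝ)
    (Bpd : Matrix (Fin np) (Fin nd) ℝ) (Bpu : Matrix (Fin np) (Fin nu) ℝ)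
    (Cpv : Matrix (Fin nvp) (Fin np) ℝ) (Dpvw : Matrix (Fin nvp) (Fin nwp) ℝ)
    (Dpvd : Matrix (Fin nvp) (Fin nd) ℝ) (Dpvu : Matrix (Fin nvp) (Fin nu) ℝ)
    (Cpe : Matrix (Fin ne) (Fin np) ℝ) (Dpew : Matrix (Fin ne) (Fin nwp) ℝ)
    (Dped : Matrix (Fin ne) (Fin nd) ℝ) (Dpeu : Matrix (Fin ne) (Fin nu) ℝ)
    (Cpy : Matrix (Fin ny) (Fin np) ℝ) (Dpyw : Matrix (Fin ny) (Fin nwp) ℝ)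
    (Dpyd : Matrix (Fin ny) (Fin nd) ℝ)
    (θ : Matrix (Fin nk ⊕ (Fin nphi ⊕ Fin nu)) (Fin nk ⊕ (Fin nphi ⊕ Fin ny)) ℝ) :
    Matrix ((Fin np ⊕ Fin nk) ⊕ ((Fin nvp ⊕ Fin nphi) ⊕ Fin ne))
      ((Fin np ⊕ Fin nk) ⊕ ((Fin nwp ⊕ Fin nphi) ⊕ Fin nd)) ℝ :=
  let Ak : Matrix (Fin nk) (Fin nk) ℝ := of fun i j => θ (Sum.inl i) (Sum.inl j)
  let Bkw : Matrix (Fin nk) (Fin nphi) ℝ :=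
    of fun i j => θ (Sum.inl i) (Sum.inr (Sum.inl j))
  let Bky : Matrix (Fin nk) (Fin ny) ℝ :=
    of fun i j => θ (Sum.inl i) (Sum.inr (Sum.inr j))
  let Ckv : Matrix (Fin nphi) (Fin nk) ℝ :=
    of fun i j => θ (Sum.inr (Sum.inl i)) (Sum.inl j)
  let Dkvw : Matrix (Fin nphi) (Fin nphi) ℝ :=
    of fun i j => θ (Sum.inr (Sum.inl i)) (Sum.inr (Sum.inl j))
  let Dkvy : Matrix (Fin nphi) (Fin ny) ℝ :=
    of fun i j => θ (Sum.inr (Sum.inl i)) (Sum.inr (Sum.inr j))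
  let Cku : Matrix (Fin nu) (Fin nk) ℝ :=
    of fun i j => θ (Sum.inr (Sum.inr i)) (Sum.inl j)
  let Dkuw : Matrix (Fin nu) (Fin nphi) ℝ :=
    of fun i j => θ (Sum.inr (Sum.inr i)) (Sum.inr (Sum.inl j))
  let Dkuy : Matrix (Fin nu) (Fin ny) ℝ :=
    of fun i j => θ (Sum.inr (Sum.inr i)) (Sum.inr (Sum.inr j))
  let A := fromBlocks (Ap + Bpu * Dkuy * Cpy) (Bpu * Cku) (Bky * Cpy) Ak
  let Bw := fromBlocks (Bpw + Bpu * Dkuy * Dpyw) (Bpu * Dkuw) (Bky * Dpyw) Bkw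
  let Bd := fromRows (Bpd + Bpu * Dkuy * Dpyd) (Bky * Dpyd)
  let Cv := fromBlocks (Cpv + Dpvu * Dkuy * Cpy) (Dpvu * Cku) (Dkvy * Cpy) Ckv
  let Dvw := fromBlocks (Dpvw + Dpvu * Dkuy * Dpyw) (Dpvu * Dkuw)
    (Dkvy * Dpyw) Dkvw
  let Dvd := fromRows (Dpvd + Dpvu * Dkuy * Dpyd) (Dkvy * Dpyd)
  let Ce := fromCols (Cpe + Dpeu * Dkuy * Cpy) (Dpeu * Cku)
  let Dew := fromCols (Dpew + Dpeu * Dkuy * Dpyw) (Dpeu * Dkuw)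
  let Ded := Dped + Dpeu * Dkuy * Dpyd
  fromBlocks A (fromCols Bw Bd) (fromRows Cv Ce) (fromBlocks Dvw Dvd Dew Ded)


section Aux

variable {l m n o m' n' : Type*}

private lemma smul_fromRows (x : ℝ) (A : Matrix l n ℝ) (B : Matrix m n ℝ) :
    x • Matrix.fromRows A B = Matrix.fromRows (x • A) (x • B) := by
  ext (i | i) j <;> simp

private lemma fromRows_add' (A : Matrix l n ℝ) (B : Matrix m n ℝ)
    (A' : Matrix l n ℝ) (B' : Matrix m n ℝ) :
    Matrix.fromRows A B + Matrix.fromRows A' B' =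
      Matrix.fromRows (A + A') (B + B') := by
  ext (i | i) j <;> simp

private lemma smul_fromColumns (x : ℝ) (A : Matrix n l ℝ) (B : Matrix n m ℝ) :
    x • Matrix.fromCols A B = Matrix.fromCols (x • A) (x • B) := by
  ext i (j | j) <;> simp

private lemma fromColumns_add' (A : Matrix n l ℝ) (B : Matrix n m ℝ)
    (A' : Matrix n l ℝ) (B' : Matrix n m ℝ) :
    Matrix.fromCols A B + Matrix.fromCols A' B' =
      Matrix.fromCols (A + A') (B + B') := by
  ext i (j | j) <;> simp

private lemma of_aff (f : m' → m) (g : n' → n) (θ₁ θ₂ : Matrix m n ℝ)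
    (a b : ℝ) :
    (Matrix.of fun i j => (a • θ₁ + b • θ₂) (f i) (g j)) =
      a • (Matrix.of fun i j => θ₁ (f i) (g j)) +
        b • (Matrix.of fun i j => θ₂ (f i) (g j)) := by
  ext i j
  simp

private lemma mul_aff [Fintype m] (M : Matrix l m ℝ) (X Y : Matrix m n ℝ)
    (a b : ℝ) : M * (a • X + b • Y) = a • (M * X) + b • (M * Y) := by
  simp [Matrix.mul_add, Matrix.mul_smul]

private lemma aff_mul [Fintype m] (X Y : Matrix l m ℝ) (N : Matrix m n ℝ)
    (a b : ℝ) : (a • X + b • Y) * N = a • (X * N) + b • (Y * N) := by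
  simp [Matrix.add_mul, Matrix.smul_mul]

private lemma const_add_aff (C X Y : Matrix l n ℝ) (t : ℝ) :
    C + (t • X + (1 - t) • Y) = t • (C + X) + (1 - t) • (C + Y) := by
  module

end Aux

/-- the map from the controller parameter block matrix `θ` to the
closed-loop state-space block matrix is affine. -/
theorem statement17 {np nk nwp nphi nd nu nvp ne ny : ℕ}
    (Ap : Matrix (Fin np) (Fin np) ℝ) (Bpw : Matrix (Fin np) (Fin nwp) ℝ)
    (Bpd : Matrix (Fin np) (Fin nd) ℝ) (Bpu : Matrix (Fin np) (Fin nu) ℝ)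
    (Cpv : Matrix (Fin nvp) (Fin np) ℝ) (Dpvw : Matrix (Fin nvp) (Fin nwp) ℝ)
    (Dpvd : Matrix (Fin nvp) (Fin nd) ℝ) (Dpvu : Matrix (Fin nvp) (Fin nu) ℝ)
    (Cpe : Matrix (Fin ne) (Fin np) ℝ) (Dpew : Matrix (Fin ne) (Fin nwp) ℝ)
    (Dped : Matrix (Fin ne) (Fin nd) ℝ) (Dpeu : Matrix (Fin ne) (Fin nu) ℝ)
    (Cpy : Matrix (Fin ny) (Fin np) ℝ) (Dpyw : Matrix (Fin ny) (Fin nwp) ℝ)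
    (Dpyd : Matrix (Fin ny) (Fin nd) ℝ) :
    ∀ (θ₁ θ₂ : Matrix (Fin nk ⊕ (Fin nphi ⊕ Fin nu))
        (Fin nk ⊕ (Fin nphi ⊕ Fin ny)) ℝ) (t : ℝ),
      closedLoopBlock Ap Bpw Bpd Bpu Cpv Dpvw Dpvd Dpvu Cpe Dpew Dped Dpeu
          Cpy Dpyw Dpyd (t • θ₁ + (1 - t) • θ₂) =
        t • closedLoopBlock Ap Bpw Bpd Bpu Cpv Dpvw Dpvd Dpvu Cpe Dpew Dped
            Dpeu Cpy Dpyw Dpyd θ₁ +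
          (1 - t) • closedLoopBlock Ap Bpw Bpd Bpu Cpv Dpvw Dpvd Dpvu Cpe Dpew
            Dped Dpeu Cpy Dpyw Dpyd θ₂ := by
  intro θ₁ θ₂ t
  simp only [closedLoopBlock, of_aff, mul_aff, aff_mul, const_add_aff,
    Matrix.fromBlocks_smul, Matrix.fromBlocks_add, smul_fromRows,
    fromRows_add', smul_fromColumns, fromColumns_add']
end
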